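/- Fix m ∈ ℕ, C3 > 0 and θ ∈ [0, π/2]. Let w_1,…,w_m ∈ ℝ^d be nonzero vectors with ‖w_j‖₂ ≤ C3 for all j and ρ(w_j, w_k) ≥ θ for all j ≠ k, and let W ∈ ℝ^{d×m} be the matrix with columns w_1,…,w_m. Then the operator norm of W satisfies ‖W‖_op² ≤ ((m−1) cos θ + 1) C3². -/

import Mathlib

open RealInnerProductSpace

/-- The nonobtuse angle `ρ(u,v) = arccos(|⟨u,v⟩| / (‖u‖‖v‖))` between two vectors. -/
noncomputable def rho {E : Type*} [NormedAddCommGroup E] [InnerProductSpace ℝ E]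
    (u v : E) : ℝ :=
  Real.arccos (|⟪u, v⟫| / (‖u‖ * ‖v‖))

/-- The operator norm `‖W‖_op = sup_{‖u‖₂=1} ‖Wu‖₂` of a matrix, viewed as a linear map
between Euclidean spaces. -/
noncomputable def matOpNorm {d m : ℕ} (W : Matrix (Fin d) (Fin m) ℝ) : ℝ :=
  ‖LinearMap.toContinuousLinearMap (Matrix.toEuclideanLin W)‖

set_option maxHeartbeats 1000000 in
/-- If the columns `w_1,…,w_m` of `W` are nonzero, have norm at most `C3`
and pairwise nonobtuse angles at least `θ ∈ [0, π/2]`, then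
`‖W‖_op² ≤ ((m−1) cos θ + 1) C3²`. -/
theorem stmt_4 {d m : ℕ} (C3 θ : ℝ) (hC3 : 0 < C3) (hθ : θ ∈ Set.Icc 0 (Real.pi / 2))
    (w : Fin m → EuclideanSpace ℝ (Fin d))
    (hw0 : ∀ j, w j ≠ 0) (hwn : ∀ j, ‖w j‖ ≤ C3)
    (hang : ∀ j k, j ≠ k → θ ≤ rho (w j) (w k))
    (W : Matrix (Fin d) (Fin m) ℝ) (hW : ∀ i j, W i j = w j i) :
    matOpNorm W ^ 2 ≤ ((m - 1 : ℝ) * Real.cos θ + 1) * C3 ^ 2 := by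
  obtain ⟨hθ0, hθπ⟩ := hθ
  have hπ : Real.pi / 2 ≤ Real.pi := by linarith [Real.pi_pos]
  have hcos0 : 0 ≤ Real.cos θ := Real.cos_nonneg_of_mem_Icc ⟨by linarith, hθπ⟩
  have hcos1 : Real.cos θ ≤ 1 := Real.cos_le_one θ
  set B : ℝ := ((m - 1 : ℝ) * Real.cos θ + 1) * C3 ^ 2 with hB
  have hC3sq : (0:ℝ) ≤ C3 ^ 2 := sq_nonneg _
  have hBnn : 0 ≤ B := by
    apply mul_nonneg _ hC3sq
    rcases Nat.eq_zero_or_pos m with h | h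
    · simp [h]; nlinarith
    · have : (1:ℝ) ≤ m := by exact_mod_cast h
      nlinarith
  -- key angle bound
  have hip : ∀ j k, j ≠ k → |⟪w j, w k⟫| ≤ Real.cos θ * (C3 ^ 2) := by
    intro j k hjk
    have hnj := norm_pos_iff.mpr (hw0 j)
    have hnk := norm_pos_iff.mpr (hw0 k)
    have hcs : |⟪w j, w k⟫| ≤ ‖w j‖ * ‖w k‖ := abs_real_inner_le_norm _ _
    have hx1 : |⟪w j, w k⟫| / (‖w j‖ * ‖w k‖) ≤ 1 := by
      rw [div_le_one (by positivity)]; exact hcs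
    have hx0 : 0 ≤ |⟪w j, w k⟫| / (‖w j‖ * ‖w k‖) := by positivity
    have h1 : |⟪w j, w k⟫| / (‖w j‖ * ‖w k‖) ≤ Real.cos θ := by
      have := hang j k hjk
      calc |⟪w j, w k⟫| / (‖w j‖ * ‖w k‖)
          = Real.cos (rho (w j) (w k)) := (Real.cos_arccos (by linarith) hx1).symm
        _ ≤ Real.cos θ := by
            apply Real.cos_le_cos_of_nonneg_of_le_pi hθ0 _ this
            · unfold rho; exact Real.arccos_le_pi _
    calc |⟪w j, w k⟫| = |⟪w j, w k⟫| / (‖w j‖ * ‖w k‖) * (‖w j‖ * ‖w k‖) := by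
          field_simp
      _ ≤ Real.cos θ * (C3 ^ 2) := by
          have : ‖w j‖ * ‖w k‖ ≤ C3 ^ 2 := by nlinarith [norm_nonneg (w j), norm_nonneg (w k), hwn j, hwn k]
          have h0 : 0 ≤ ‖w j‖ * ‖w k‖ := by positivity
          nlinarith
  set T := LinearMap.toContinuousLinearMap (Matrix.toEuclideanLin W) with hT
  have key : ∀ u : EuclideanSpace ℝ (Fin m), ‖T u‖ ≤ Real.sqrt B * ‖u‖ := by
    intro u
    have hTu : T u = ∑ j, u j • w j := by
      ext i
      simp only [hT, LinearMap.coe_toContinuousLinearMap', Matrix.toEuclideanLin_apply]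
      show Matrix.mulVec W (fun j => u j) i = _
      rw [Matrix.mulVec, dotProduct]
      have hsum : ∀ s : Finset (Fin m), (∑ j ∈ s, u j • w j : EuclideanSpace ℝ (Fin d)) i = ∑ j ∈ s, u j * w j i := by
        intro s
        induction s using Finset.induction with
        | empty => simp
        | insert _ _ hj ih =>
          rw [Finset.sum_insert hj, Finset.sum_insert hj, PiLp.add_apply, PiLp.smul_apply, ih,
            smul_eq_mul]
      rw [hsum Finset.univ]
      exact Finset.sum_congr rfl fun j _ => by rw [hW i j]; ring
    have hnorm2 : ‖T u‖ ^ 2 = ∑ j, ∑ k, (u j) * (u k) * ⟪w j, w k⟫ := by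
      rw [← real_inner_self_eq_norm_sq, hTu, sum_inner]
      congr 1; ext j
      rw [inner_sum]
      congr 1; ext k
      rw [real_inner_smul_left, real_inner_smul_right]; ring
    set S : ℝ := ∑ j, (u j) ^ 2 with hS
    have hSnn : 0 ≤ S := Finset.sum_nonneg fun j _ => sq_nonneg _
    have hA : (∑ j, |u j|) ^ 2 ≤ (m : ℝ) * S := by
      have := sq_sum_le_card_mul_sum_sq (s := Finset.univ) (f := fun j : Fin m => |u j|)
      simpa [sq_abs] using this
    have hbound : ∑ j, ∑ k, (u j) * (u k) * ⟪w j, w k⟫ ≤ B * S := by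
      have step : ∀ j k : Fin m, (u j) * (u k) * ⟪w j, w k⟫ ≤
          Real.cos θ * C3 ^ 2 * (|u j| * |u k|) +
            (if j = k then (1 - Real.cos θ) * C3 ^ 2 * (u j) ^ 2 else 0) := by
        intro j k
        rcases eq_or_ne j k with rfl | hjk
        · rw [if_pos rfl]
          have h1 : ⟪w j, w j⟫ = ‖w j‖ ^ 2 := real_inner_self_eq_norm_sq (w j)
          have h2 : ‖w j‖ ^ 2 ≤ C3 ^ 2 := by nlinarith [norm_nonneg (w j), hwn j]
          have : (u j) * (u j) * ⟪w j, w j⟫ ≤ (u j)^2 * C3^2 := by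
            rw [h1]; nlinarith [sq_nonneg (u j), real_inner_self_nonneg (x := w j)]
          have habs : |u j| * |u j| = (u j)^2 := by rw [← abs_mul, abs_mul_self]; ring
          rw [habs]; nlinarith
        · simp only [if_neg hjk, add_zero]
          calc (u j) * (u k) * ⟪w j, w k⟫ ≤ |(u j) * (u k) * ⟪w j, w k⟫| := le_abs_self _
            _ = |u j| * |u k| * |⟪w j, w k⟫| := by rw [abs_mul, abs_mul]
            _ ≤ |u j| * |u k| * (Real.cos θ * C3 ^ 2) := by
                apply mul_le_mul_of_nonneg_left (hip j k hjk) (by positivity)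
            _ = Real.cos θ * C3 ^ 2 * (|u j| * |u k|) := by ring
      calc ∑ j, ∑ k, (u j) * (u k) * ⟪w j, w k⟫
          ≤ ∑ j, ∑ k, (Real.cos θ * C3 ^ 2 * (|u j| * |u k|) +
              (if j = k then (1 - Real.cos θ) * C3 ^ 2 * (u j) ^ 2 else 0)) :=
            Finset.sum_le_sum fun j _ => Finset.sum_le_sum fun k _ => step j k
        _ = Real.cos θ * C3 ^ 2 * (∑ j, |u j|) ^ 2 + (1 - Real.cos θ) * C3 ^ 2 * S := by
            simp only [Finset.sum_add_distrib, Finset.sum_ite_eq, Finset.mem_univ, if_true]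
            rw [hS, pow_two (∑ j : Fin m, |u j|), Finset.sum_mul_sum, Finset.mul_sum]
            congr 1
            · exact Finset.sum_congr rfl fun j _ => by rw [Finset.mul_sum]
            · rw [Finset.mul_sum]
        _ ≤ Real.cos θ * C3 ^ 2 * ((m:ℝ) * S) + (1 - Real.cos θ) * C3 ^ 2 * S := by
            have : 0 ≤ Real.cos θ * C3 ^ 2 := by positivity
            nlinarith
        _ = B * S := by rw [hB]; ring
    have hS' : S = ‖u‖ ^ 2 := by
      rw [hS, ← real_inner_self_eq_norm_sq, PiLp.inner_apply]
      exact Finset.sum_congr rfl fun j _ => by simp [RCLike.inner_apply, sq]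
    have h2 : ‖T u‖ ^ 2 ≤ B * ‖u‖ ^ 2 := by rw [hnorm2]; rw [hS'] at hbound; exact hbound
    nlinarith [h2, norm_nonneg (T u), mul_nonneg (Real.sqrt_nonneg B) (norm_nonneg u),
      Real.sq_sqrt hBnn, Real.sqrt_nonneg B, norm_nonneg u]
  have hle : matOpNorm W ≤ Real.sqrt B := by
    unfold matOpNorm
    exact ContinuousLinearMap.opNorm_le_bound _ (Real.sqrt_nonneg B) key
  have := pow_le_pow_left₀ (norm_nonneg _) hle 2
  rw [Real.sq_sqrt hBnn] at this
  exact this
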